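/- Claim (the paper's Claim 3.5). Let r be an order with levels on X, let (τ₀, ω₀) be a persistence pair of r, and let ε > 0. Then for every n-simplex ω̃ ∉ SV_ε(r, τ₀, ω₀) there exists q ∈ R_ε such that ω̃ ∉ OV(q, ω₀). -/

import Mathlib

open scoped Classical

namespace StableVol

/-- A finite abstract simplicial complex of dimension `n`: a finite family of nonempty
finite subsets of the vertex set, closed under nonempty subsets, in which every element
is contained in an element of cardinality `n+1`. -/
structure NComplex (V : Type*) [DecidableEq V] (n : ℕ) where
  X : Finset (Finset V)
  nonempty_mem : ∀ σ ∈ X, σ.Nonempty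
  down_closed : ∀ σ ∈ X, ∀ σ' : Finset V, σ' ⊆ σ → σ'.Nonempty → σ' ∈ X
  contained_top : ∀ σ ∈ X, ∃ ω ∈ X, σ ⊆ ω ∧ ω.card = n + 1

variable {V : Type*} [DecidableEq V] {n : ℕ}

/-- An `n`-cell is either an `n`-simplex (`some ω`) or the formal cell `ω∞` (`none`). -/
abbrev Cell (V : Type*) := Option (Finset V)

/-- `τ` is a face of the cell `c`.  For `c = some ω` this means that `ω` is an
`n`-simplex of `X` containing `τ`; the faces of `ω∞ = none` are the `(n-1)`-simplices
having exactly one `n`-simplex coface. -/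
def faceCell (C : NComplex V n) (τ : Finset V) : Cell V → Prop
  | some ω => ω ∈ C.X ∧ ω.card = n + 1 ∧ τ ⊆ ω
  | none => {ω | ω ∈ C.X ∧ ω.card = n + 1 ∧ τ ⊆ ω}.ncard = 1

def IsCell (C : NComplex V n) : Cell V → Prop
  | some ω => ω ∈ C.X ∧ ω.card = n + 1
  | none => True

/-- Adjacency in the dual graph, restricted to the edge set `E ⊆ X^(n-1)`. -/
def adj (C : NComplex V n) (E : Set (Finset V)) (c c' : Cell V) : Prop :=
  ∃ τ ∈ E, faceCell C τ c ∧ faceCell C τ c' ∧ c ≠ c'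

/-- `KV C E c₀`: the set of `n`-cells in the connected component of `c₀` in the
subgraph of the dual graph with edge set `E`. -/
def KV (C : NComplex V n) (E : Set (Finset V)) (c₀ : Cell V) : Set (Cell V) :=
  {c | Relation.ReflTransGen (adj C E) c₀ c}

/-- Every `(n-1)`-simplex of `X` is a face of exactly two `n`-cells. -/
def TwoCofaces (C : NComplex V n) : Prop :=
  ∀ τ ∈ C.X, τ.card = n →
    ∃ c₁ c₂ : Cell V, c₁ ≠ c₂ ∧ ∀ c : Cell V, faceCell C τ c ↔ (c = c₁ ∨ c = c₂)

/-- The dual graph (with full edge set `X^(n-1)`) is connected. -/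
def DualConn (C : NComplex V n) : Prop :=
  ∀ c c' : Cell V, IsCell C c → IsCell C c' →
    c' ∈ KV C {τ | τ ∈ C.X ∧ τ.card = n} c

/-- A level function: monotone with respect to strict inclusion of simplices. -/
def IsLevelFun (C : NComplex V n) (lev : Finset V → ℝ) : Prop :=
  ∀ σ ∈ C.X, ∀ σ' ∈ C.X, σ ⊂ σ' → lev σ ≤ lev σ'

/-- `(lev, slt)` is an order with levels on `X`: `lev` is a level function and `slt`
is (the strict form of) a linear order on `X` refining both `lev` and strict
inclusion. -/
def IsOWL (C : NComplex V n) (lev : Finset V → ℝ)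
    (slt : Finset V → Finset V → Prop) : Prop :=
  IsLevelFun C lev ∧
  (∀ σ ∈ C.X, ¬ slt σ σ) ∧
  (∀ σ ∈ C.X, ∀ σ' ∈ C.X, ∀ σ'' ∈ C.X, slt σ σ' → slt σ' σ'' → slt σ σ'') ∧
  (∀ σ ∈ C.X, ∀ σ' ∈ C.X, σ ≠ σ' → slt σ σ' ∨ slt σ' σ) ∧
  (∀ σ ∈ C.X, ∀ σ' ∈ C.X, slt σ σ' → lev σ ≤ lev σ') ∧
  (∀ σ ∈ C.X, ∀ σ' ∈ C.X, σ ⊂ σ' → slt σ σ')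

/-- Extension of a strict order on simplices to `n`-cells, `ω∞ = none` being the
unique maximum. -/
def cslt (slt : Finset V → Finset V → Prop) : Cell V → Cell V → Prop
  | some σ, some σ' => slt σ σ'
  | some _, none => True
  | none, _ => False

/-- `m` is the maximum cell of the set `S` with respect to the order `slt`. -/
def IsMaxCell (slt : Finset V → Finset V → Prop) (S : Set (Cell V)) (m : Cell V) :
    Prop :=
  m ∈ S ∧ ∀ c ∈ S, c ≠ m → cslt slt c m

/-- Edge set of `G(≻ σ₀)`: the `(n-1)`-simplices strictly above `σ₀`. -/
def Egt (C : NComplex V n) (slt : Finset V → Finset V → Prop) (σ₀ : Finset V) :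
    Set (Finset V) :=
  {τ | τ ∈ C.X ∧ τ.card = n ∧ slt σ₀ τ}

/-- Edge set of `G(⪰ σ₀)`. -/
def Ege (C : NComplex V n) (slt : Finset V → Finset V → Prop) (σ₀ : Finset V) :
    Set (Finset V) :=
  {τ | τ ∈ C.X ∧ τ.card = n ∧ (τ = σ₀ ∨ slt σ₀ τ)}

/-- Edge set of `G(lev ≥ s)`. -/
def Elev (C : NComplex V n) (lev : Finset V → ℝ) (s : ℝ) : Set (Finset V) :=
  {τ | τ ∈ C.X ∧ τ.card = n ∧ s ≤ lev τ}

/-- `(τ₀, ω₀)` is a persistence pair of the order `slt`: the two `n`-cells having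
`τ₀` as a face lie in distinct connected components of `G(≻ τ₀)`, and `ω₀` is the
smaller of the two maximum cells of these two components. -/
def IsPersPair (C : NComplex V n) (slt : Finset V → Finset V → Prop)
    (τ₀ ω₀ : Finset V) : Prop :=
  τ₀ ∈ C.X ∧ τ₀.card = n ∧ ω₀ ∈ C.X ∧ ω₀.card = n + 1 ∧
  ∃ c₁ c₂ : Cell V, c₁ ≠ c₂ ∧ faceCell C τ₀ c₁ ∧ faceCell C τ₀ c₂ ∧
    c₂ ∉ KV C (Egt C slt τ₀) c₁ ∧
    ∃ m₂ : Cell V,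
      IsMaxCell slt (KV C (Egt C slt τ₀) c₁) (some ω₀) ∧
      IsMaxCell slt (KV C (Egt C slt τ₀) c₂) m₂ ∧
      cslt slt (some ω₀) m₂

/-- The optimal volume `OV(q, ω₀) = K_V(G(≻_q τ_{q,ω₀}), ω₀)`. -/
def OV (C : NComplex V n) (slt : Finset V → Finset V → Prop) (ω₀ : Finset V) :
    Set (Cell V) :=
  {c | ∃ τ, IsPersPair C slt τ ω₀ ∧ c ∈ KV C (Egt C slt τ) (some ω₀)}

/-- The stable volume `SV_ε(r, τ₀, ω₀) = K_V(G(r̂ ≥ r̂(τ₀) + ε), ω₀)`. -/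
def SV (C : NComplex V n) (lev : Finset V → ℝ) (τ₀ ω₀ : Finset V) (ε : ℝ) :
    Set (Cell V) :=
  KV C (Elev C lev (lev τ₀ + ε)) (some ω₀)

/-- `(qlev, qslt) ∈ R_ε`: an order with levels uniformly `ε/2`-close to `rlev`
satisfying the `(r, ω₀)`-order condition. -/
def InR (C : NComplex V n) (rlev : Finset V → ℝ)
    (rslt : Finset V → Finset V → Prop) (ω₀ : Finset V) (ε : ℝ)
    (qlev : Finset V → ℝ) (qslt : Finset V → Finset V → Prop) : Prop :=
  IsOWL C qlev qslt ∧ (∀ σ ∈ C.X, |qlev σ - rlev σ| < ε / 2) ∧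
  (∀ σ ∈ C.X, rslt σ ω₀ → qslt σ ω₀)

/-- `F_{ε,n}`: the `n`-simplices with level at least `lev τ₀ + ε` that precede `ω₀`. -/
def Fcells (C : NComplex V n) (lev : Finset V → ℝ)
    (slt : Finset V → Finset V → Prop) (τ₀ ω₀ : Finset V) (ε : ℝ) :
    Set (Finset V) :=
  {σ | σ ∈ C.X ∧ σ.card = n + 1 ∧ lev τ₀ + ε ≤ lev σ ∧ slt σ ω₀}

/-- `F_{ε,n-1}`: the `(n-1)`-simplices with level at least `lev τ₀ + ε` that
precede `ω₀`. -/
def Fedges (C : NComplex V n) (lev : Finset V → ℝ)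
    (slt : Finset V → Finset V → Prop) (τ₀ ω₀ : Finset V) (ε : ℝ) :
    Set (Finset V) :=
  {σ | σ ∈ C.X ∧ σ.card = n ∧ lev τ₀ + ε ≤ lev σ ∧ slt σ ω₀}

/-- `τ*(∂z)`: the `ℤ/2ℤ`-sum of the coefficients of `z` over the `n`-simplex
cofaces of `τ`. -/
def bsum (C : NComplex V n) (τ : Finset V) (z : Finset V → ZMod 2) : ZMod 2 :=
  ∑ ω ∈ C.X.filter (fun ω => ω.card = n + 1 ∧ τ ⊆ ω), z ω

/-- A feasible chain `z = ω₀ + Σ_{ω ∈ F_{ε,n}} α_ω ω` with `τ*(∂z) = 0` for all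
`τ ∈ F_{ε,n-1}`. -/
def IsFeasible (C : NComplex V n) (lev : Finset V → ℝ)
    (slt : Finset V → Finset V → Prop) (τ₀ ω₀ : Finset V) (ε : ℝ)
    (z : Finset V → ZMod 2) : Prop :=
  z ω₀ = 1 ∧
  (∀ ω : Finset V, ω ≠ ω₀ → ω ∉ Fcells C lev slt τ₀ ω₀ ε → z ω = 0) ∧
  (∀ τ ∈ Fedges C lev slt τ₀ ω₀ ε, bsum C τ z = 0)

/-- `‖z‖₀`: the number of simplices of `X` with nonzero coefficient in `z`. -/
def norm0 (C : NComplex V n) (z : Finset V → ZMod 2) : ℕ :=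
  (C.X.filter fun ω => z ω ≠ 0).card

/-- The level function of the perturbed order `q(r, η, A)`. -/
noncomputable def pertLev (C : NComplex V n) (rlev : Finset V → ℝ) (η : ℝ)
    (A : Set (Finset V)) : Finset V → ℝ :=
  fun σ => if (σ ∈ C.X ∧ σ.card = n + 1) ∨ σ ∈ A then rlev σ + η else rlev σ - η

/-- The strict order of the perturbed order `q(r, η, A)`. -/
def pertSlt (C : NComplex V n) (rlev : Finset V → ℝ)
    (rslt : Finset V → Finset V → Prop) (η : ℝ) (A : Set (Finset V)) :
    Finset V → Finset V → Prop :=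
  fun σ σ' => pertLev C rlev η A σ < pertLev C rlev η A σ' ∨
    (pertLev C rlev η A σ = pertLev C rlev η A σ' ∧ rslt σ σ')

/-- The `(n-1)`-simplices that are edges of the connected component of `c₀` in the
subgraph with edge set `E`. -/
def compEdges (C : NComplex V n) (E : Set (Finset V)) (c₀ : Cell V) :
    Set (Finset V) :=
  {τ | τ ∈ E ∧ ∃ c, faceCell C τ c ∧ c ∈ KV C E c₀}

/-- `IsPath C E c c' vs es`: `vs` is the vertex list and `es` the edge list of a walk
from `c` to `c'` in the subgraph of the dual graph with edge set `E`. -/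
inductive IsPath (C : NComplex V n) (E : Set (Finset V)) :
    Cell V → Cell V → List (Cell V) → List (Finset V) → Prop
  | nil (c : Cell V) : IsPath C E c c [c] []
  | cons {c c' c'' : Cell V} {vs : List (Cell V)} {es : List (Finset V)}
      {τ : Finset V} : τ ∈ E → faceCell C τ c → faceCell C τ c' → c ≠ c' →
      IsPath C E c' c'' vs es → IsPath C E c c'' (c :: vs) (τ :: es)


/-! ### Auxiliary lemmas for Claim 3.5 -/

lemma adj_symm {C : NComplex V n} {E : Set (Finset V)} {c c' : Cell V}
    (h : adj C E c c') : adj C E c' c := by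
  obtain ⟨τ, hτ, h1, h2, h3⟩ := h
  exact ⟨τ, hτ, h2, h1, h3.symm⟩

lemma adj_mono {C : NComplex V n} {E E' : Set (Finset V)} (hEE : E ⊆ E')
    {c c' : Cell V} (h : adj C E c c') : adj C E' c c' := by
  obtain ⟨τ, hτ, h1, h2, h3⟩ := h
  exact ⟨τ, hEE hτ, h1, h2, h3⟩

lemma rtg_adj_symm {C : NComplex V n} {E : Set (Finset V)} {c c' : Cell V}
    (h : Relation.ReflTransGen (adj C E) c c') :
    Relation.ReflTransGen (adj C E) c' c := by
  induction h with
  | refl => exact .refl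
  | tail _ hbc ih => exact Relation.ReflTransGen.trans (.single (adj_symm hbc)) ih

lemma kv_mono {C : NComplex V n} {E E' : Set (Finset V)} (hEE : E ⊆ E')
    (c : Cell V) : KV C E c ⊆ KV C E' c := fun _ h =>
  Relation.ReflTransGen.mono (fun _ _ => adj_mono hEE) _ _ h

lemma kv_eq_of_mem {C : NComplex V n} {E : Set (Finset V)} {c c' : Cell V}
    (h : c' ∈ KV C E c) : KV C E c' = KV C E c := by
  have h' : Relation.ReflTransGen (adj C E) c c' := h
  ext x
  constructor
  · intro hx
    exact Relation.ReflTransGen.trans h' hx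
  · intro hx
    exact Relation.ReflTransGen.trans (rtg_adj_symm h') hx

lemma faceCell_cases {C : NComplex V n} {e : Finset V} {c : Cell V}
    (h : faceCell C e c) :
    c = none ∨ ∃ ω, c = some ω ∧ ω ∈ C.X ∧ ω.card = n + 1 := by
  cases c with
  | none => exact Or.inl rfl
  | some ω => exact Or.inr ⟨ω, rfl, h.1, h.2.1⟩

lemma mem_kv_cases {C : NComplex V n} {E : Set (Finset V)} {c c' : Cell V}
    (h : c' ∈ KV C E c) :
    c' = c ∨ c' = none ∨ ∃ ω, c' = some ω ∧ ω ∈ C.X ∧ ω.card = n + 1 := by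
  have h' : Relation.ReflTransGen (adj C E) c c' := h
  induction h' with
  | refl => exact Or.inl rfl
  | tail _ hbc _ =>
    obtain ⟨τ, _, _, h2, _⟩ := hbc
    exact Or.inr (faceCell_cases h2)

lemma card_le_of_memX {C : NComplex V n} {σ : Finset V} (h : σ ∈ C.X) :
    σ.card ≤ n + 1 := by
  obtain ⟨ω, _, hsub, hcard⟩ := C.contained_top σ h
  calc σ.card ≤ ω.card := Finset.card_le_card hsub
  _ = n + 1 := hcard

lemma cofaces_pair {C : NComplex V n} (htwo : TwoCofaces C) {e : Finset V}
    (heX : e ∈ C.X) (hec : e.card = n) {y z : Cell V}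
    (hy : faceCell C e y) (hz : faceCell C e z) (hyz : y ≠ z) :
    ∀ c, faceCell C e c → c = y ∨ c = z := by
  obtain ⟨c₁, c₂, hne, hiff⟩ := htwo e heX hec
  intro c hc
  rcases (hiff y).1 hy with h1 | h1 <;> rcases (hiff z).1 hz with h2 | h2 <;>
    rcases (hiff c).1 hc with h3 | h3 <;>
      first
        | (exact Or.inl (h3.trans h1.symm))
        | (exact Or.inr (h3.trans h2.symm))
        | (exact absurd (h1.trans h2.symm) hyz)

lemma exists_maxCell {C : NComplex V n} {slt : Finset V → Finset V → Prop}
    (htr : ∀ σ ∈ C.X, ∀ σ' ∈ C.X, ∀ σ'' ∈ C.X, slt σ σ' → slt σ' σ'' → slt σ σ'')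
    (hto : ∀ σ ∈ C.X, ∀ σ' ∈ C.X, σ ≠ σ' → slt σ σ' ∨ slt σ' σ)
    (F : Finset (Cell V))
    (hF : ∀ c ∈ F, c = none ∨ ∃ ω, c = some ω ∧ ω ∈ C.X)
    (hne : F.Nonempty) :
    ∃ m ∈ F, ∀ c ∈ F, c ≠ m → cslt slt c m := by
  classical
  induction F using Finset.induction_on with
  | empty => exact absurd hne (by simp)
  | @insert a F' ha ih =>
    rcases F'.eq_empty_or_nonempty with rfl | hF'ne
    · refine ⟨a, by simp, ?_⟩
      intro c hc hca
      simp at hc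
      exact absurd hc hca
    · obtain ⟨m', hm'F, hmax'⟩ := ih (fun c hc => hF c (Finset.mem_insert_of_mem hc)) hF'ne
      have ham' : a ≠ m' := fun h => ha (h ▸ hm'F)
      have hPa := hF a (Finset.mem_insert_self a F')
      have hPm := hF m' (Finset.mem_insert_of_mem hm'F)
      -- totality of cslt on a, m'
      have htot : cslt slt a m' ∨ cslt slt m' a := by
        rcases hPa with rfl | ⟨ω, rfl, hωX⟩
        · rcases hPm with rfl | ⟨ω', rfl, _⟩
          · exact absurd rfl ham'
          · exact Or.inr trivial
        · rcases hPm with rfl | ⟨ω', rfl, hω'X⟩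
          · exact Or.inl trivial
          · have : ω ≠ ω' := fun h => ham' (by rw [h])
            rcases hto ω hωX ω' hω'X this with h | h
            · exact Or.inl h
            · exact Or.inr h
      rcases htot with hcase | hcase
      · refine ⟨m', Finset.mem_insert_of_mem hm'F, ?_⟩
        intro c hc hcm
        rcases Finset.mem_insert.1 hc with rfl | hc'
        · exact hcase
        · exact hmax' c hc' hcm
      · refine ⟨a, Finset.mem_insert_self a F', ?_⟩
        intro c hc hca
        rcases Finset.mem_insert.1 hc with rfl | hc'
        · exact absurd rfl hca
        · by_cases hcm : c = m'
          · exact hcm ▸ hcase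
          · have h1 : cslt slt c m' := hmax' c hc' hcm
            -- transitivity of cslt
            rcases hPa with rfl | ⟨ω, rfl, hωX⟩
            · cases c with
              | none => exact absurd h1 (by rcases hPm with rfl | ⟨ω', rfl, _⟩ <;> simp [cslt])
              | some γ => exact trivial
            · rcases hPm with rfl | ⟨ω', rfl, hω'X⟩
              · exact absurd hcase (by simp [cslt])
              · cases c with
                | none => exact absurd h1 (by simp [cslt])
                | some γ =>
                  have hγX : γ ∈ C.X := by
                    rcases hF _ hc with h | ⟨ω'', he, hX⟩
                    · simp at h
                    · rw [Option.some_inj.1 he]; exact hX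
                  exact htr γ hγX ω' hω'X ω hωX h1 hcase

lemma last_exit {C : NComplex V n} (htwo : TwoCofaces C) {E : Set (Finset V)}
    (hE : ∀ e ∈ E, e ∈ C.X ∧ e.card = n) {S : Set (Cell V)} {a b : Cell V}
    (h : Relation.ReflTransGen (adj C E) a b) (hb : b ∉ S) :
    (a ∉ S ∧ Relation.ReflTransGen
      (adj C {e | e ∈ E ∧ ∀ c, faceCell C e c → c ∉ S}) a b) ∨
    ∃ e y z, e ∈ E ∧ faceCell C e y ∧ faceCell C e z ∧ y ≠ z ∧ y ∈ S ∧ z ∉ S ∧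
      Relation.ReflTransGen
        (adj C {e | e ∈ E ∧ ∀ c, faceCell C e c → c ∉ S}) z b := by
  induction h using Relation.ReflTransGen.head_induction_on with
  | refl => exact Or.inl ⟨hb, .refl⟩
  | head hadj _ ih =>
    rename_i a' c' _
    obtain ⟨e, heE, hfa, hfc, hac⟩ := hadj
    rcases ih with ⟨hcS, hpath⟩ | ⟨e', y, z, h1, h2, h3, h4, h5, h6, h7⟩
    · by_cases haS : a' ∈ S
      · exact Or.inr ⟨e, a', c', heE, hfa, hfc, hac, haS, hcS, hpath⟩
      · left
        refine ⟨haS, hpath.head ⟨e, ⟨heE, ?_⟩, hfa, hfc, hac⟩⟩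
        intro c hc
        rcases cofaces_pair htwo (hE e heE).1 (hE e heE).2 hfa hfc hac c hc with
          rfl | rfl
        · exact haS
        · exact hcS
    · exact Or.inr ⟨e', y, z, h1, h2, h3, h4, h5, h6, h7⟩

/-- Claim 3.5: every `n`-simplex outside the stable volume is
avoided by the optimal volume of some `q ∈ R_ε`. -/
theorem exists_q_optimal_volume_avoids
    (hn : 2 ≤ n) (C : NComplex V n) (htwo : TwoCofaces C) (hconn : DualConn C)
    (rlev : Finset V → ℝ) (rslt : Finset V → Finset V → Prop)
    (hr : IsOWL C rlev rslt)
    (τ₀ ω₀ : Finset V) (hpair : IsPersPair C rslt τ₀ ω₀)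
    (ε : ℝ) (hε : 0 < ε)
    (ωt : Finset V) (hωtX : ωt ∈ C.X) (hωtc : ωt.card = n + 1)
    (hωt : (some ωt : Cell V) ∉ SV C rlev τ₀ ω₀ ε) :
    ∃ (qlev : Finset V → ℝ) (qslt : Finset V → Finset V → Prop),
      InR C rlev rslt ω₀ ε qlev qslt ∧ (some ωt : Cell V) ∉ OV C qslt ω₀ := by
  classical
  obtain ⟨hrLev, hrIrr, hrTrans, hrTot, hrComp, hrIncl⟩ := hr
  obtain ⟨hτ₀X, hτ₀c, hω₀X, hω₀c, c₁, c₂, hc12, hf1, hf2, hsep, m₂, hmax1, hmax2,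
    hm₂gt⟩ := hpair
  -- basic facts about the stable volume
  have hElevEgt : Elev C rlev (rlev τ₀ + ε) ⊆ Egt C rslt τ₀ := by
    rintro e ⟨heX, hec, hle⟩
    refine ⟨heX, hec, ?_⟩
    have hne : τ₀ ≠ e := by intro h; rw [← h] at hle; linarith
    rcases hrTot τ₀ hτ₀X e heX hne with h | h
    · exact h
    · have := hrComp e heX τ₀ hτ₀X h; linarith
  have hω₀SV : (some ω₀ : Cell V) ∈ SV C rlev τ₀ ω₀ ε := Relation.ReflTransGen.refl
  have hSVsub : SV C rlev τ₀ ω₀ ε ⊆ KV C (Egt C rslt τ₀) c₁ := by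
    have h1 : SV C rlev τ₀ ω₀ ε ⊆ KV C (Egt C rslt τ₀) (some ω₀) :=
      kv_mono hElevEgt _
    rw [kv_eq_of_mem hmax1.1] at h1
    exact h1
  have hSVmax : ∀ c ∈ SV C rlev τ₀ ω₀ ε, c ≠ some ω₀ → cslt rslt c (some ω₀) :=
    fun c hc => hmax1.2 c (hSVsub hc)
  have hnoneSV : (none : Cell V) ∉ SV C rlev τ₀ ω₀ ε := by
    intro h
    exact hSVmax none h (by simp)
  have hm₂X : m₂ = none ∨ ∃ μ, m₂ = some μ ∧ μ ∈ C.X ∧ μ.card = n + 1 := by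
    rcases mem_kv_cases hmax2.1 with h | h
    · rw [h]; exact faceCell_cases hf2
    · exact h
  have hm₂SV : m₂ ∉ SV C rlev τ₀ ω₀ ε := by
    rcases hm₂X with rfl | ⟨μ, rfl, hμX, _⟩
    · exact hnoneSV
    · intro h
      have hgt : rslt ω₀ μ := hm₂gt
      have hne : (some μ : Cell V) ≠ some ω₀ := by
        intro hh
        rw [Option.some_inj.1 hh] at hgt
        exact hrIrr ω₀ hω₀X hgt
      have hlt : rslt μ ω₀ := hSVmax _ h hne
      exact hrIrr ω₀ hω₀X (hrTrans ω₀ hω₀X μ hμX ω₀ hω₀X hgt hlt)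
  -- a walk from ω₀ to m₂ in G(⪰_r τ₀)
  have hEgtEge : Egt C rslt τ₀ ⊆ Ege C rslt τ₀ := by
    rintro e ⟨h1, h2, h3⟩; exact ⟨h1, h2, Or.inr h3⟩
  have rall : Relation.ReflTransGen (adj C (Ege C rslt τ₀)) (some ω₀) m₂ := by
    have r1 : Relation.ReflTransGen (adj C (Egt C rslt τ₀)) (some ω₀) c₁ :=
      rtg_adj_symm hmax1.1
    have r2 : adj C (Ege C rslt τ₀) c₁ c₂ :=
      ⟨τ₀, ⟨hτ₀X, hτ₀c, Or.inl rfl⟩, hf1, hf2, hc12⟩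
    have r3 : Relation.ReflTransGen (adj C (Egt C rslt τ₀)) c₂ m₂ := hmax2.1
    exact (Relation.ReflTransGen.mono (fun _ _ => adj_mono hEgtEge) _ _ r1).trans
      ((Relation.ReflTransGen.single r2).trans
        (Relation.ReflTransGen.mono (fun _ _ => adj_mono hEgtEge) _ _ r3))
  have hEgeEdges : ∀ e ∈ Ege C rslt τ₀, e ∈ C.X ∧ e.card = n :=
    fun e he => ⟨he.1, he.2.1⟩
  rcases last_exit htwo hEgeEdges rall hm₂SV with ⟨h, _⟩ |
    ⟨τs, y, z, hτsE, hfy, hfz, hyz, hySV, hzSV, hpath⟩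
  · exact absurd hω₀SV h
  have hτsX : τs ∈ C.X := hτsE.1
  have hτsc : τs.card = n := hτsE.2.1
  have hτs_ge : rlev τ₀ ≤ rlev τs := by
    rcases hτsE.2.2 with h | h
    · rw [h]
    · exact hrComp τ₀ hτ₀X τs hτsX h
  have hτs_lt : rlev τs < rlev τ₀ + ε := by
    by_contra hcon
    push_neg at hcon
    have hySV' : Relation.ReflTransGen (adj C (Elev C rlev (rlev τ₀ + ε)))
        (some ω₀) y := hySV
    have : (z : Cell V) ∈ SV C rlev τ₀ ω₀ ε :=
      Relation.ReflTransGen.tail hySV' ⟨τs, ⟨hτsX, hτsc, hcon⟩, hfy, hfz, hyz⟩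
    exact hzSV this
  -- the level gap below rlev τ₀ + ε
  obtain ⟨g, hgdef⟩ : ∃ g : ℝ, g = (if hne : ((C.X.filter
      (fun σ => rlev σ < rlev τ₀ + ε)).image
      (fun σ => rlev τ₀ + ε - rlev σ)).Nonempty then
      ((C.X.filter (fun σ => rlev σ < rlev τ₀ + ε)).image
      (fun σ => rlev τ₀ + ε - rlev σ)).min' hne else ε) := ⟨_, rfl⟩
  have hg0 : 0 < g := by
    rw [hgdef]
    split
    · rename_i hne
      obtain ⟨σ, hσ, hval⟩ := Finset.mem_image.1 (Finset.min'_mem _ hne)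
      rw [← hval]
      have := (Finset.mem_filter.1 hσ).2
      linarith
    · exact hε
  have hgle : ∀ σ ∈ C.X, rlev σ < rlev τ₀ + ε → rlev σ ≤ rlev τ₀ + ε - g := by
    intro σ hσ hlt
    have hmem : rlev τ₀ + ε - rlev σ ∈ (C.X.filter
        (fun σ => rlev σ < rlev τ₀ + ε)).image
        (fun σ => rlev τ₀ + ε - rlev σ) :=
      Finset.mem_image_of_mem _ (Finset.mem_filter.2 ⟨hσ, hlt⟩)
    have hne : ((C.X.filter (fun σ => rlev σ < rlev τ₀ + ε)).image
        (fun σ => rlev τ₀ + ε - rlev σ)).Nonempty := ⟨_, hmem⟩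
    rw [hgdef, dif_pos hne]
    have := Finset.min'_le _ _ hmem
    linarith
  obtain ⟨δ, hδdef⟩ : ∃ δ : ℝ, δ = min g ε / 4 := ⟨_, rfl⟩
  have hmin1 : min g ε ≤ g := min_le_left _ _
  have hmin2 : min g ε ≤ ε := min_le_right _ _
  have hmin0 : 0 < min g ε := lt_min hg0 hε
  have hδ0 : 0 < δ := by rw [hδdef]; linarith
  have hδg : 3 * δ < g := by rw [hδdef]; linarith
  have hδε2 : δ < ε / 2 := by rw [hδdef]; linarith
  obtain ⟨η, hηdef⟩ : ∃ η : ℝ, η = ε / 2 - δ := ⟨_, rfl⟩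
  have hη0 : 0 < η := by rw [hηdef]; linarith
  have hηε2 : η < ε / 2 := by rw [hηdef]; linarith
  have hτs_le_g : rlev τs ≤ rlev τ₀ + ε - g := hgle τs hτsX hτs_lt
  -- the raised edge set
  obtain ⟨A, hAdef⟩ : ∃ A : Set (Finset V), A = Elev C rlev (rlev τ₀ + ε) ∪
      {e | e ∈ Ege C rslt τ₀ ∧ ∀ c, faceCell C e c → c ∉ SV C rlev τ₀ ω₀ ε} :=
    ⟨_, rfl⟩
  have hA_edges : ∀ e ∈ A, e ∈ C.X ∧ e.card = n := by
    rw [hAdef]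
    rintro e (he | he)
    · exact ⟨he.1, he.2.1⟩
    · exact ⟨he.1.1, he.1.2.1⟩
  have hA_lev : ∀ e ∈ A, rlev τ₀ ≤ rlev e := by
    rw [hAdef]
    rintro e (he | he)
    · have := he.2.2; linarith
    · rcases he.1.2.2 with h | h
      · rw [h]
      · exact hrComp τ₀ hτ₀X e he.1.1 h
  have hτsA : τs ∉ A := by
    rw [hAdef]
    rintro (he | he)
    · have := he.2.2; linarith
    · exact he.2 y hfy hySV
  -- the perturbed order
  obtain ⟨qlev, hqlevdef⟩ : ∃ qlev : Finset V → ℝ, qlev = fun σ =>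
      if σ = τs then rlev τ₀ + ε / 2 - 2 * δ
      else if (σ ∈ C.X ∧ σ.card = n + 1) ∨ σ ∈ A then rlev σ + η
      else rlev σ - η := ⟨_, rfl⟩
  obtain ⟨qslt, hqsltdef⟩ : ∃ qslt : Finset V → Finset V → Prop, qslt = fun σ σ' =>
      qlev σ < qlev σ' ∨ (qlev σ = qlev σ' ∧ rslt σ σ') := ⟨_, rfl⟩
  have hqslt_iff : ∀ σ σ', qslt σ σ' ↔
      (qlev σ < qlev σ' ∨ (qlev σ = qlev σ' ∧ rslt σ σ')) := by
    intro σ σ'; rw [hqsltdef]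
  have hqτs : qlev τs = rlev τ₀ + ε / 2 - 2 * δ := by
    rw [hqlevdef]; simp
  have hqR : ∀ σ, σ ≠ τs → ((σ ∈ C.X ∧ σ.card = n + 1) ∨ σ ∈ A) →
      qlev σ = rlev σ + η := by
    intro σ h1 h2
    simp only [hqlevdef]
    rw [if_neg h1, if_pos h2]
  have hqL : ∀ σ, σ ≠ τs → ¬((σ ∈ C.X ∧ σ.card = n + 1) ∨ σ ∈ A) →
      qlev σ = rlev σ - η := by
    intro σ h1 h2
    simp only [hqlevdef]
    rw [if_neg h1, if_neg h2]
  have hub : ∀ σ ∈ C.X, qlev σ ≤ rlev σ + η := by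
    intro σ hσ
    by_cases h1 : σ = τs
    · subst h1; rw [hqτs]; linarith
    · by_cases h2 : (σ ∈ C.X ∧ σ.card = n + 1) ∨ σ ∈ A
      · rw [hqR σ h1 h2]
      · rw [hqL σ h1 h2]; linarith
  have hlb : ∀ σ ∈ C.X, rlev σ - η ≤ qlev σ := by
    intro σ hσ
    by_cases h1 : σ = τs
    · subst h1; rw [hqτs]; linarith
    · by_cases h2 : (σ ∈ C.X ∧ σ.card = n + 1) ∨ σ ∈ A
      · rw [hqR σ h1 h2]; linarith
      · rw [hqL σ h1 h2]
  have hqIrr : ∀ σ ∈ C.X, ¬ qslt σ σ := by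
    intro σ hσ h
    rcases (hqslt_iff σ σ).1 h with h | h
    · exact lt_irrefl _ h
    · exact hrIrr σ hσ h.2
  have hqTrans : ∀ σ ∈ C.X, ∀ σ' ∈ C.X, ∀ σ'' ∈ C.X,
      qslt σ σ' → qslt σ' σ'' → qslt σ σ'' := by
    intro a ha b hb c hc h1 h2
    apply (hqslt_iff a c).2
    rcases (hqslt_iff a b).1 h1 with h1 | ⟨e1, h1⟩ <;>
      rcases (hqslt_iff b c).1 h2 with h2 | ⟨e2, h2⟩
    · exact Or.inl (h1.trans h2)
    · exact Or.inl (e2 ▸ h1)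
    · exact Or.inl (lt_of_le_of_lt (le_of_eq e1) h2)
    · exact Or.inr ⟨e1.trans e2, hrTrans a ha b hb c hc h1 h2⟩
  have hqTot : ∀ σ ∈ C.X, ∀ σ' ∈ C.X, σ ≠ σ' → qslt σ σ' ∨ qslt σ' σ := by
    intro a ha b hb hne
    rcases lt_trichotomy (qlev a) (qlev b) with h | h | h
    · exact Or.inl ((hqslt_iff a b).2 (Or.inl h))
    · rcases hrTot a ha b hb hne with hh | hh
      · exact Or.inl ((hqslt_iff a b).2 (Or.inr ⟨h, hh⟩))
      · exact Or.inr ((hqslt_iff b a).2 (Or.inr ⟨h.symm, hh⟩))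
    · exact Or.inr ((hqslt_iff b a).2 (Or.inl h))
  have hqle : ∀ {σ σ'}, qslt σ σ' → qlev σ ≤ qlev σ' := by
    intro a b h
    rcases (hqslt_iff a b).1 h with h | h
    · exact le_of_lt h
    · exact le_of_eq h.1
  -- key computations
  have hkey1 : ∀ e ∈ A, qslt τs e := by
    intro e he
    have h1 : e ≠ τs := fun h => hτsA (h ▸ he)
    apply (hqslt_iff τs e).2
    left
    rw [hqτs, hqR e h1 (Or.inr he)]
    have := hA_lev e he
    linarith
  have hkey2 : Egt C qslt τs = A := by
    ext e
    constructor
    · rintro ⟨heX, hec, hq⟩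
      by_contra heA
      have heτs : e ≠ τs := by
        rintro rfl
        exact hqIrr e heX hq
      have hql : qlev e = rlev e - η := by
        refine hqL e heτs ?_
        rintro (⟨_, hcard⟩ | hA')
        · rw [hec] at hcard; omega
        · exact heA hA'
      have hle : qlev τs ≤ qlev e := hqle hq
      rw [hqτs, hql] at hle
      by_cases hlt : rlev e < rlev τ₀ + ε
      · have := hgle e heX hlt; linarith
      · push_neg at hlt
        exact heA (by rw [hAdef]; exact Or.inl ⟨heX, hec, hlt⟩)
    · intro he
      exact ⟨(hA_edges e he).1, (hA_edges e he).2, hkey1 e he⟩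
  have hkey3 : KV C A (some ω₀) = SV C rlev τ₀ ω₀ ε := by
    apply Set.Subset.antisymm
    · have hgen : ∀ c : Cell V, Relation.ReflTransGen (adj C A) (some ω₀) c →
          c ∈ SV C rlev τ₀ ω₀ ε := by
        intro c hc
        induction hc with
        | refl => exact hω₀SV
        | tail hab hbc ih =>
          obtain ⟨e, heA, hfb, hfc, hne⟩ := hbc
          rw [hAdef] at heA
          rcases heA with he | he
          · have ih' : Relation.ReflTransGen (adj C (Elev C rlev (rlev τ₀ + ε)))
                (some ω₀) _ := ih
            exact Relation.ReflTransGen.tail ih' ⟨e, he, hfb, hfc, hne⟩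
          · exact absurd ih (he.2 _ hfb)
      exact fun c hc => hgen c hc
    · rw [hAdef]
      exact kv_mono Set.subset_union_left _
  -- q is an order with levels
  have hmono : ∀ σ ∈ C.X, ∀ σ' ∈ C.X, σ ⊂ σ' → qlev σ ≤ qlev σ' := by
    intro σ hσ σ' hσ' hss
    have hrle : rlev σ ≤ rlev σ' := hrLev σ hσ σ' hσ' hss
    have hcards : σ.card < σ'.card := Finset.card_lt_card hss
    by_cases h1 : σ' = τs
    · have hcards' : σ.card < n := by rw [h1, hτsc] at hcards; omega
      have hσne : σ ≠ τs := by
        intro hh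
        rw [hh, hτsc] at hcards'
        exact lt_irrefl _ hcards'
      have hσL : qlev σ = rlev σ - η := by
        refine hqL σ hσne ?_
        rintro (⟨_, hcard⟩ | hA')
        · omega
        · have := (hA_edges σ hA').2; omega
      have hrle' : rlev σ ≤ rlev τs := by rw [← h1]; exact hrle
      rw [hσL, h1]
      calc rlev σ - η ≤ rlev τs - η := by linarith
      _ ≤ qlev τs := hlb τs hτsX
    · by_cases h2 : (σ' ∈ C.X ∧ σ'.card = n + 1) ∨ σ' ∈ A
      · rw [hqR σ' h1 h2]
        exact (hub σ hσ).trans (by linarith)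
      · have hσ'le : σ'.card ≤ n + 1 := card_le_of_memX hσ'
        have hσne : σ ≠ τs := by
          rintro rfl
          rw [hτsc] at hcards
          exact h2 (Or.inl ⟨hσ', by omega⟩)
        have hσnR : ¬((σ ∈ C.X ∧ σ.card = n + 1) ∨ σ ∈ A) := by
          rintro (⟨_, hcard⟩ | hA')
          · omega
          · have := (hA_edges σ hA').2
            exact h2 (Or.inl ⟨hσ', by omega⟩)
        rw [hqL σ hσne hσnR, hqL σ' h1 h2]
        linarith
  have hOWL : IsOWL C qlev qslt := by
    refine ⟨hmono, hqIrr, hqTrans, hqTot, fun σ _ σ' _ h => hqle h, ?_⟩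
    intro σ hσ σ' hσ' hss
    rcases lt_or_eq_of_le (hmono σ hσ σ' hσ' hss) with h | h
    · exact (hqslt_iff _ _).2 (Or.inl h)
    · exact (hqslt_iff _ _).2 (Or.inr ⟨h, hrIncl σ hσ σ' hσ' hss⟩)
  have hclose : ∀ σ ∈ C.X, |qlev σ - rlev σ| < ε / 2 := by
    intro σ hσ
    rw [abs_lt]
    by_cases h1 : σ = τs
    · subst h1
      rw [hqτs]
      constructor <;> linarith
    · by_cases h2 : (σ ∈ C.X ∧ σ.card = n + 1) ∨ σ ∈ A
      · rw [hqR σ h1 h2]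
        constructor <;> linarith
      · rw [hqL σ h1 h2]
        constructor <;> linarith
  have hω₀τs : ω₀ ≠ τs := by
    intro h
    rw [h, hτsc] at hω₀c
    omega
  have hqω₀ : qlev ω₀ = rlev ω₀ + η := hqR ω₀ hω₀τs (Or.inl ⟨hω₀X, hω₀c⟩)
  have hOC : ∀ σ ∈ C.X, rslt σ ω₀ → qslt σ ω₀ := by
    intro σ hσ hrσ
    have hrle := hrComp σ hσ ω₀ hω₀X hrσ
    apply (hqslt_iff σ ω₀).2
    by_cases h1 : σ = τs
    · subst h1
      left
      rw [hqτs, hqω₀]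
      linarith
    · by_cases h2 : (σ ∈ C.X ∧ σ.card = n + 1) ∨ σ ∈ A
      · rw [hqR σ h1 h2, hqω₀]
        rcases lt_or_eq_of_le hrle with h | h
        · left; linarith
        · right; exact ⟨by rw [h], hrσ⟩
      · left
        rw [hqL σ h1 h2, hqω₀]
        linarith
  have hqn : ∀ ω, ω ∈ C.X → ω.card = n + 1 → ∀ ω', ω' ∈ C.X → ω'.card = n + 1 →
      rslt ω ω' → qslt ω ω' := by
    intro ω hω hωc ω' hω' hω'c hlt
    have h1 : ω ≠ τs := by intro h; rw [h, hτsc] at hωc; omega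
    have h2 : ω' ≠ τs := by intro h; rw [h, hτsc] at hω'c; omega
    apply (hqslt_iff _ _).2
    rw [hqR ω h1 (Or.inl ⟨hω, hωc⟩), hqR ω' h2 (Or.inl ⟨hω', hω'c⟩)]
    have := hrComp ω hω ω' hω' hlt
    rcases lt_or_eq_of_le this with h | h
    · left; linarith
    · right; exact ⟨by rw [h], hlt⟩
  -- the q-components of y and z
  have hKVy : KV C (Egt C qslt τs) y = SV C rlev τ₀ ω₀ ε := by
    rw [hkey2, ← hkey3]
    exact kv_eq_of_mem (by rw [hkey3]; exact hySV)
  have hKVz : KV C (Egt C qslt τs) z = KV C A z := by rw [hkey2]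
  have hEAsubA : {e | e ∈ Ege C rslt τ₀ ∧
      ∀ c, faceCell C e c → c ∉ SV C rlev τ₀ ω₀ ε} ⊆ A := by
    rw [hAdef]; exact Set.subset_union_right
  have hm₂KAz : m₂ ∈ KV C A z :=
    Relation.ReflTransGen.mono (fun _ _ => adj_mono hEAsubA) _ _ hpath
  have hzP : z = none ∨ ∃ ζ, z = some ζ ∧ ζ ∈ C.X ∧ ζ.card = n + 1 :=
    faceCell_cases hfz
  -- the maximum of the component of z
  obtain ⟨F, hFdef⟩ : ∃ F : Finset (Cell V),
      F = (insert (none : Cell V) (C.X.image some)).filter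
        (fun c => c ∈ KV C A z) := ⟨_, rfl⟩
  have hSF : ∀ c ∈ KV C A z, c ∈ F := by
    intro c hc
    rw [hFdef, Finset.mem_filter]
    refine ⟨?_, hc⟩
    rcases mem_kv_cases hc with h | h | ⟨ω, h, hω, _⟩
    · rw [h]
      rcases hzP with h' | ⟨ζ, h', hζ, _⟩
      · rw [h']; exact Finset.mem_insert_self _ _
      · rw [h']; exact Finset.mem_insert_of_mem (Finset.mem_image_of_mem some hζ)
    · rw [h]; exact Finset.mem_insert_self _ _
    · rw [h]; exact Finset.mem_insert_of_mem (Finset.mem_image_of_mem some hω)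
  have hFP : ∀ c ∈ F, c = none ∨ ∃ ω, c = some ω ∧ ω ∈ C.X := by
    intro c hc
    rw [hFdef, Finset.mem_filter] at hc
    rcases Finset.mem_insert.1 hc.1 with h | hmem
    · exact Or.inl h
    · obtain ⟨ω, hω, h⟩ := Finset.mem_image.1 hmem
      exact Or.inr ⟨ω, h.symm, hω⟩
  have hFne : F.Nonempty := ⟨z, hSF z Relation.ReflTransGen.refl⟩
  obtain ⟨mstar, hmF, hmmax⟩ := exists_maxCell hqTrans hqTot F hFP hFne
  have hmS : mstar ∈ KV C A z := by
    rw [hFdef, Finset.mem_filter] at hmF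
    exact hmF.2
  have hmaxS : ∀ c ∈ KV C A z, c ≠ mstar → cslt qslt c mstar :=
    fun c hc => hmmax c (hSF c hc)
  have hmP : mstar = none ∨ ∃ ν, mstar = some ν ∧ ν ∈ C.X := hFP mstar hmF
  have hω₀m : cslt qslt (some ω₀) mstar := by
    rcases hmP with rfl | ⟨ν, rfl, hνX⟩
    · trivial
    · rcases hm₂X with rfl | ⟨μ, rfl, hμX, hμc⟩
      · have := hmaxS none hm₂KAz (by simp)
        exact absurd this (by simp [cslt])
      · have hgt : rslt ω₀ μ := hm₂gt
        have hq1 : qslt ω₀ μ := hqn ω₀ hω₀X hω₀c μ hμX hμc hgt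
        by_cases hμν : μ = ν
        · subst hμν; exact hq1
        · have h2 : cslt qslt (some μ) (some ν) := hmaxS _ hm₂KAz (by simp [hμν])
          exact hqTrans ω₀ hω₀X μ hμX ν hνX hq1 h2
  -- (τs, ω₀) is a persistence pair of q
  have hqpair : IsPersPair C qslt τs ω₀ := by
    refine ⟨hτsX, hτsc, hω₀X, hω₀c, y, z, hyz, hfy, hfz, ?_, mstar, ?_, ?_, hω₀m⟩
    · rw [hKVy]; exact hzSV
    · rw [hKVy]
      refine ⟨hω₀SV, ?_⟩
      intro c hc hne
      have hc' : c ∈ KV C (Elev C rlev (rlev τ₀ + ε)) (some ω₀) := hc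
      rcases mem_kv_cases hc' with h | h | ⟨γ, h, hγX, _⟩
      · exact absurd h hne
      · rw [h] at hc
        exact absurd hc hnoneSV
      · subst h
        exact hOC γ hγX (hSVmax _ hc hne)
    · rw [hKVz]
      exact ⟨hmS, hmaxS⟩
  -- conclusion
  refine ⟨qlev, qslt, ⟨hOWL, hclose, hOC⟩, ?_⟩
  rintro ⟨τ, hpp, hmem⟩
  obtain ⟨hτX, hτc, -, -, c₁', c₂', hc12', hf1', hf2', hsep', m₂', hmax1', hmax2',
    hm₂gt'⟩ := hpp
  by_cases hττs : τ = τs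
  · subst hττs
    rw [hkey2, hkey3] at hmem
    exact hωt hmem
  · rcases hqTot τ hτX τs hτsX hττs with hq | hq
    · -- the pair edge is below τs : the component of ω₀ would contain mstar
      have hAsub : A ⊆ Egt C qslt τ := by
        intro e he
        exact ⟨(hA_edges e he).1, (hA_edges e he).2,
          hqTrans τ hτX τs hτsX e (hA_edges e he).1 hq (hkey1 e he)⟩
      have p1 : Relation.ReflTransGen (adj C (Egt C qslt τ)) (some ω₀) y := by
        have h1 : Relation.ReflTransGen (adj C A) (some ω₀) y := by
          have : y ∈ KV C A (some ω₀) := by rw [hkey3]; exact hySV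
          exact this
        exact Relation.ReflTransGen.mono (fun _ _ => adj_mono hAsub) _ _ h1
      have p2 : adj C (Egt C qslt τ) y z := ⟨τs, ⟨hτsX, hτsc, hq⟩, hfy, hfz, hyz⟩
      have p3 : Relation.ReflTransGen (adj C (Egt C qslt τ)) z mstar :=
        Relation.ReflTransGen.mono (fun _ _ => adj_mono hAsub) _ _ hmS
      have hmIn : mstar ∈ KV C (Egt C qslt τ) (some ω₀) := (p1.tail p2).trans p3
      have hKV1 : KV C (Egt C qslt τ) (some ω₀) = KV C (Egt C qslt τ) c₁' :=
        kv_eq_of_mem hmax1'.1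
      have hmIn' : mstar ∈ KV C (Egt C qslt τ) c₁' := hKV1 ▸ hmIn
      have hne : mstar ≠ some ω₀ := by
        rintro rfl
        exact hqIrr ω₀ hω₀X hω₀m
      have hlt := hmax1'.2 mstar hmIn' hne
      rcases hmP with rfl | ⟨ν, rfl, hνX⟩
      · exact hlt
      · exact hqIrr ω₀ hω₀X (hqTrans ω₀ hω₀X ν hνX ω₀ hω₀X hω₀m hlt)
    · -- the pair edge is above τs : its whole component lies in SV
      have hsub : Egt C qslt τ ⊆ A := by
        intro e he
        rw [← hkey2]
        exact ⟨he.1, he.2.1, hqTrans τs hτsX τ hτX e he.1 hq he.2.2⟩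
      have hτA : τ ∈ A := by
        rw [← hkey2]
        exact ⟨hτX, hτc, hq⟩
      have hc₁A : Relation.ReflTransGen (adj C A) (some ω₀) c₁' :=
        Relation.ReflTransGen.mono (fun _ _ => adj_mono hsub) _ _ (rtg_adj_symm hmax1'.1)
      have hc₂A : Relation.ReflTransGen (adj C A) (some ω₀) c₂' :=
        hc₁A.tail ⟨τ, hτA, hf1', hf2', hc12'⟩
      have hm₂'A : Relation.ReflTransGen (adj C A) (some ω₀) m₂' :=
        hc₂A.trans (Relation.ReflTransGen.mono (fun _ _ => adj_mono hsub) _ _ hmax2'.1)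
      have hm₂'SV : m₂' ∈ SV C rlev τ₀ ω₀ ε := by
        rw [← hkey3]
        exact hm₂'A
      have hm₂'SV' : m₂' ∈ KV C (Elev C rlev (rlev τ₀ + ε)) (some ω₀) := hm₂'SV
      rcases mem_kv_cases hm₂'SV' with h | h | ⟨ν', h, hν'X, _⟩
      · rw [h] at hm₂gt'
        exact hqIrr ω₀ hω₀X hm₂gt'
      · rw [h] at hm₂'SV
        exact hnoneSV hm₂'SV
      · subst h
        have hne' : (some ν' : Cell V) ≠ some ω₀ := by
          intro h
          rw [Option.some_inj.1 h] at hm₂gt'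
          exact hqIrr ω₀ hω₀X hm₂gt'
        have h1 : rslt ν' ω₀ := hSVmax _ hm₂'SV hne'
        have h2 : qslt ν' ω₀ := hOC ν' hν'X h1
        exact hqIrr ω₀ hω₀X (hqTrans ω₀ hω₀X ν' hν'X ω₀ hω₀X hm₂gt' h2)

end StableVol
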